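/- Let 0 < α < θ < 1 - α < 1 and suppose t0 = ⌊Tθ⌋. Define r(t) = -t(T - t0)/T + (t - t0)·1{t > t0}. Then there exist constants 0 < c2 ≤ c1 < ∞ (depending only on α and θ) such that for all T sufficiently large and all integers t with 1 ≤ t ≤ T, -c1·|t0 - t|·T ≤ r(t)² - r(t0)² ≤ -c2·|t0 - t|·T. -/

import Mathlib

set_option maxHeartbeats 800000


/-- The drift function r(t) = -t(T - t0)/T + (t - t0)·1{t > t0}. -/
noncomputable def rfun (T t0 : ℕ) (t : ℝ) : ℝ :=
  -(t * ((T : ℝ) - (t0 : ℝ)) / (T : ℝ)) + (t - (t0 : ℝ)) * (if (t0 : ℝ) < t then 1 else 0)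

lemma rfun_of_le {T t0 : ℕ} {x : ℝ} (h : x ≤ (t0 : ℝ)) :
    rfun T t0 x = -(x * ((T : ℝ) - (t0 : ℝ)) / (T : ℝ)) := by
  unfold rfun
  rw [if_neg (not_lt.mpr h)]
  ring

lemma rfun_of_gt {T t0 : ℕ} {x : ℝ} (hT : 0 < (T : ℝ)) (h : (t0 : ℝ) < x) :
    rfun T t0 x = -((t0 : ℝ) * ((T : ℝ) - x) / (T : ℝ)) := by
  unfold rfun
  rw [if_pos h]
  field_simp
  ring

theorem stmt_1 (θ α : ℝ) (hα : 0 < α) (hαθ : α < θ) (hθ : θ < 1 - α) (h1 : 1 - α < 1) :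
    ∃ c1 c2 : ℝ, 0 < c2 ∧ c2 ≤ c1 ∧
      ∃ T0 : ℕ, ∀ T : ℕ, T0 ≤ T →
        ∀ t : ℕ, 1 ≤ t → t ≤ T →
          -c1 * |((⌊(T : ℝ) * θ⌋₊ : ℝ)) - (t : ℝ)| * (T : ℝ)
              ≤ rfun T ⌊(T : ℝ) * θ⌋₊ (t : ℝ) ^ 2
                - rfun T ⌊(T : ℝ) * θ⌋₊ ((⌊(T : ℝ) * θ⌋₊ : ℕ) : ℝ) ^ 2 ∧
          rfun T ⌊(T : ℝ) * θ⌋₊ (t : ℝ) ^ 2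
              - rfun T ⌊(T : ℝ) * θ⌋₊ ((⌊(T : ℝ) * θ⌋₊ : ℕ) : ℝ) ^ 2
            ≤ -c2 * |((⌊(T : ℝ) * θ⌋₊ : ℝ)) - (t : ℝ)| * (T : ℝ) := by
  have hθ0 : 0 < θ := lt_trans hα hαθ
  have hθ1 : θ < 1 := by linarith
  have hθ1' : (0:ℝ) < 1 - θ := by linarith
  have hpos : 0 < θ * (1 - θ) := mul_pos hθ0 hθ1'
  refine ⟨2, θ^2 * (1 - θ)^2 / 4, ?_, ?_, ⌊2/θ⌋₊ + 1, ?_⟩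
  · nlinarith [mul_pos hpos hpos]
  · nlinarith [mul_le_mul_of_nonneg_left (show θ * (1 - θ) ≤ 1 by nlinarith) hpos.le]
  intro T hT t ht1 htT
  set n : ℝ := (T : ℝ) with hn_def
  set s : ℝ := ((⌊n * θ⌋₊ : ℕ) : ℝ) with hs_def
  set x : ℝ := (t : ℝ) with hx_def
  have h2n : 2 / θ < n := by
    have ha : 2 / θ < (⌊2/θ⌋₊ : ℝ) + 1 := Nat.lt_floor_add_one _
    have hb : ((⌊2/θ⌋₊ : ℕ) : ℝ) + 1 ≤ n := by
      rw [hn_def]; exact_mod_cast hT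
    linarith
  have hn0 : 0 < n := lt_trans (by positivity) h2n
  have h2θn : 2 ≤ θ * n := by
    have h := mul_lt_mul_of_pos_left h2n hθ0
    have h' : θ * (2 / θ) = 2 := by field_simp
    linarith
  have hx1 : (1 : ℝ) ≤ x := by rw [hx_def]; exact_mod_cast ht1
  have hxn : x ≤ n := by rw [hx_def, hn_def]; exact_mod_cast htT
  have hsle : s ≤ n * θ := Nat.floor_le (by positivity)
  have hslt : n * θ < s + 1 := Nat.lt_floor_add_one _
  have hs1 : 1 ≤ s := by linarith
  have hsn : s < n := by nlinarith
  have hns : (1 - θ) * n ≤ n - s := by nlinarith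
  have hrs : rfun T ⌊n * θ⌋₊ s = -(s * (n - s) / n) := rfun_of_le le_rfl
  have hn2 : (0 : ℝ) < n ^ 2 := by positivity
  rcases le_or_gt x s with hxs | hxs
  · -- case t ≤ t0
    have hrx : rfun T ⌊n * θ⌋₊ x = -(x * (n - s) / n) := rfun_of_le hxs
    have habs : |s - x| = s - x := abs_of_nonneg (by linarith)
    have hD : rfun T ⌊n * θ⌋₊ x ^ 2 - rfun T ⌊n * θ⌋₊ s ^ 2
        = ((x ^ 2 - s ^ 2) * (n - s) ^ 2) / n ^ 2 := by
      rw [hrx, hrs]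
      field_simp
    have hd : 0 ≤ s - x := by linarith
    have hupper : (s + x) * (n - s) ^ 2 ≤ 2 * n ^ 3 := by
      have h := mul_le_mul (show s + x ≤ 2 * n by linarith)
        (pow_le_pow_left₀ (by linarith : (0:ℝ) ≤ n - s) (by linarith : n - s ≤ n) 2)
        (sq_nonneg (n - s)) (by linarith)
      linarith [h]
    have hlower : θ * (1 - θ) ^ 2 * n ^ 3 ≤ (s + x) * (n - s) ^ 2 := by
      have ha : θ * n ≤ s + x := by linarith
      have hb : ((1 - θ) * n) ^ 2 ≤ (n - s) ^ 2 :=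
        pow_le_pow_left₀ (by positivity) hns 2
      have h := mul_le_mul ha hb (by positivity) (by linarith)
      linarith [h]
    constructor
    · rw [hD, habs, le_div_iff₀ hn2]
      have hm := mul_le_mul_of_nonneg_left hupper hd
      linarith [hm]
    · rw [hD, habs, div_le_iff₀ hn2]
      have hc : θ ^ 2 * (1 - θ) ^ 2 / 4 * n ^ 3 ≤ θ * (1 - θ) ^ 2 * n ^ 3 := by
        have hco : 0 ≤ (θ * (1 - θ) ^ 2 * (4 - θ)) * n ^ 3 :=
          mul_nonneg (mul_nonneg (mul_nonneg hθ0.le (sq_nonneg _)) (by linarith)) (by positivity)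
        linarith [hco]
      have hm := mul_le_mul_of_nonneg_left (le_trans hc hlower) hd
      linarith [hm]
  · -- case t > t0
    have hrx : rfun T ⌊n * θ⌋₊ x = -(s * (n - x) / n) := rfun_of_gt hn0 hxs
    have habs : |s - x| = x - s := by rw [abs_of_nonpos (by linarith)]; ring
    have hD : rfun T ⌊n * θ⌋₊ x ^ 2 - rfun T ⌊n * θ⌋₊ s ^ 2
        = (s ^ 2 * (s - x) * (2 * n - x - s)) / n ^ 2 := by
      rw [hrx, hrs]
      field_simp
      ring
    have hd : 0 ≤ x - s := by linarith
    have hs2 : θ * n / 2 ≤ s := by linarith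
    have hupper : s ^ 2 * (2 * n - x - s) ≤ 2 * n ^ 3 := by
      have h := mul_le_mul
        (pow_le_pow_left₀ (by linarith : (0:ℝ) ≤ s) (by linarith : s ≤ n) 2)
        (show 2 * n - x - s ≤ 2 * n by linarith) (by linarith) (sq_nonneg n)
      linarith [h]
    have hlower : θ ^ 2 * (1 - θ) * n ^ 3 / 4 ≤ s ^ 2 * (2 * n - x - s) := by
      have ha : (θ * n / 2) ^ 2 ≤ s ^ 2 := pow_le_pow_left₀ (by positivity) hs2 2
      have hb : (1 - θ) * n ≤ 2 * n - x - s := by linarith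
      have h := mul_le_mul ha hb (by positivity) (sq_nonneg s)
      linarith [h]
    constructor
    · rw [hD, habs, le_div_iff₀ hn2]
      have hm := mul_le_mul_of_nonneg_left hupper hd
      linarith [hm]
    · rw [hD, habs, div_le_iff₀ hn2]
      have hc : θ ^ 2 * (1 - θ) ^ 2 / 4 * n ^ 3 ≤ θ ^ 2 * (1 - θ) * n ^ 3 / 4 := by
        have hco : 0 ≤ (θ ^ 2 * (1 - θ) * θ) * n ^ 3 := by positivity
        linarith [hco]
      have hm := mul_le_mul_of_nonneg_left (le_trans hc hlower) hd
      linarith [hm]
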